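/- Let (X, 𝓑, m) be a σ-finite measure space and q a quadratic form on L⁰(m) whose domain D(q) is a lattice (closed under pointwise min and max). Then q is monotone (|f| ≤ |g| a.e. with f, g ∈ D(q) implies q(f) ≤ q(g)) if and only if q is nonnegative definite (f, g ∈ D(q) with fg ≥ 0 a.e. implies q(f,g) ≥ 0). -/

import Mathlib

open MeasureTheory ENNReal

/-- The bilinear form induced by a quadratic form via polarization. -/
noncomputable def polar {V : Type*} [AddCommGroup V] (q : V → ℝ≥0∞) (f g : V) : ℝ :=
  ((q (f + g)).toReal - (q (f - g)).toReal) / 4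

theorem stmt6 {α : Type*} [MeasurableSpace α] {μ : Measure α} [SigmaFinite μ]
    (q : (α →ₘ[μ] ℝ) → ℝ≥0∞)
    (hhom : ∀ (l : ℝ) (f : α →ₘ[μ] ℝ), q (l • f) = ENNReal.ofReal (l ^ 2) * q f)
    (hpar : ∀ f g : α →ₘ[μ] ℝ, q (f + g) + q (f - g) = 2 * q f + 2 * q g)
    -- the domain of `q` is a lattice
    (hlat : ∀ f g : α →ₘ[μ] ℝ, q f < ⊤ → q g < ⊤ → q (f ⊓ g) < ⊤ ∧ q (f ⊔ g) < ⊤) :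
    -- `q` is monotone iff `q` is nonnegative definite
    (∀ f g : α →ₘ[μ] ℝ, q f < ⊤ → q g < ⊤ → |f| ≤ |g| → q f ≤ q g) ↔
      (∀ f g : α →ₘ[μ] ℝ, q f < ⊤ → q g < ⊤ → 0 ≤ f * g → 0 ≤ polar q f g) := by
  constructor
  · intro hmono f g hf hg hfg
    have hsum : q (f + g) + q (f - g) = 2 * q f + 2 * q g := hpar f g
    have hfin : q (f + g) + q (f - g) < ⊤ := by
      rw [hsum]
      exact ENNReal.add_lt_top.2 ⟨ENNReal.mul_lt_top ENNReal.ofNat_lt_top hf,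
        ENNReal.mul_lt_top ENNReal.ofNat_lt_top hg⟩
    have h1 : q (f + g) < ⊤ := lt_of_le_of_lt le_self_add hfin
    have h2 : q (f - g) < ⊤ := lt_of_le_of_lt le_add_self hfin
    have hfg' : (⇑(0 : α →ₘ[μ] ℝ) : α → ℝ) ≤ᵐ[μ] ⇑(f * g) := (AEEqFun.coeFn_le).2 hfg
    have habs : |f - g| ≤ |f + g| := by
      rw [← AEEqFun.coeFn_le]
      filter_upwards [AEEqFun.coeFn_abs (f - g), AEEqFun.coeFn_abs (f + g),
        AEEqFun.coeFn_sub f g, AEEqFun.coeFn_add f g, AEEqFun.coeFn_mul f g,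
        AEEqFun.coeFn_zero (β := ℝ) (μ := μ), hfg'] with a e1 e2 e3 e4 e5 e6 e7
      rw [e1, e2, e3, e4]
      rw [e5, e6] at e7
      simp only [Pi.mul_apply, Pi.zero_apply] at e7
      simp only [Pi.sub_apply, Pi.add_apply]
      have h0 : (0:ℝ) ≤ f a * g a := e7
      nlinarith [sq_abs (f a - g a), sq_abs (f a + g a), abs_nonneg (f a - g a),
        abs_nonneg (f a + g a)]
    have hle : q (f - g) ≤ q (f + g) := hmono _ _ h2 h1 habs
    have : (q (f - g)).toReal ≤ (q (f + g)).toReal :=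
      (ENNReal.toReal_le_toReal h2.ne h1.ne).2 hle
    rw [polar]
    linarith
  · intro hpos f g hf hg hfg
    have hsum : q (g + f) + q (g - f) = 2 * q g + 2 * q f := hpar g f
    have hfin : q (g + f) + q (g - f) < ⊤ := by
      rw [hsum]
      exact ENNReal.add_lt_top.2 ⟨ENNReal.mul_lt_top ENNReal.ofNat_lt_top hg,
        ENNReal.mul_lt_top ENNReal.ofNat_lt_top hf⟩
    have h1 : q (g + f) < ⊤ := lt_of_le_of_lt le_self_add hfin
    have h2 : q (g - f) < ⊤ := lt_of_le_of_lt le_add_self hfin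
    have hfg' : (⇑|f| : α → ℝ) ≤ᵐ[μ] (⇑|g|) := (AEEqFun.coeFn_le).2 hfg
    have hmul : (0 : α →ₘ[μ] ℝ) ≤ (g - f) * (g + f) := by
      rw [← AEEqFun.coeFn_le]
      filter_upwards [AEEqFun.coeFn_abs f, AEEqFun.coeFn_abs g,
        AEEqFun.coeFn_sub g f, AEEqFun.coeFn_add g f,
        AEEqFun.coeFn_mul (g - f) (g + f), AEEqFun.coeFn_zero (β := ℝ) (μ := μ),
        hfg'] with a e1 e2 e3 e4 e5 e6 e7
      rw [e5, e6]
      simp only [Pi.mul_apply, Pi.zero_apply]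
      rw [e3, e4]
      simp only [Pi.sub_apply, Pi.add_apply]
      rw [e1, e2] at e7
      nlinarith [sq_abs (f a), sq_abs (g a), abs_nonneg (f a), abs_nonneg (g a),
        mul_self_le_mul_self (abs_nonneg (f a)) e7]
    have key := hpos (g - f) (g + f) h2 h1 hmul
    have e1 : (g - f) + (g + f) = (2:ℝ) • g := by
      rw [two_smul]; abel
    have e2 : (g - f) - (g + f) = (-2:ℝ) • f := by
      rw [neg_smul, two_smul]; abel
    rw [polar, e1, e2, hhom, hhom] at key
    norm_num at key
    have hfr : (q f).toReal ≤ (q g).toReal := by linarith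
    exact (ENNReal.toReal_le_toReal hf.ne hg.ne).1 hfr
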